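/- Let (G,M,I) be a finite context with ∅'' = ∅, let z ∈ G and H = G ∖ {z}, let π□ be the finest extent partition of (G,M,I), let z^□□ be the class of π□ containing z, and assume z^□□ ≠ {z}. If T_G is a maximal classification tree in the box extent lattice B(G,M,I), then there exists a maximal classification tree M in the box extent lattice B(H, M, I ∩ (H×M)) of the subcontext such that T_G = M*, where M* = {E ∈ M : E is a box extent of (G,M,I)} ∪ {E ∪ {z} : E ∈ M, E ∪ {z} is a box extent of (G,M,I)}. -/

import Mathlib

open Set

variable {G M : Type*}

/-- The attribute-derivation `A'` of a set of objects (the restricted relation of a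
subcontext agrees with `I` on its object set, so no restriction is needed here). -/
def polarUp (I : G → M → Prop) (A : Set G) : Set M := {m | ∀ g ∈ A, I g m}

/-- The object-derivation `B'` of a set of attributes, computed in the subcontext whose
object set is `H` (relation `I ∩ H×M`). -/
def polarDown (I : G → M → Prop) (H : Set G) (B : Set M) : Set G :=
  {g | g ∈ H ∧ ∀ m ∈ B, I g m}

/-- The closure `A''` computed in the subcontext with object set `H`.
Taking `H = Set.univ` gives the closure in the full context `(G,M,I)`. -/
def cl2 (I : G → M → Prop) (H A : Set G) : Set G := polarDown I H (polarUp I A)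

/-- `A` is an extent of the subcontext with object set `H`. -/
def IsExtent (I : G → M → Prop) (H A : Set G) : Prop := A ⊆ H ∧ cl2 I H A = A

/-- An extent partition of the subcontext with object set `H`: a partition of `H`
all of whose classes are extents. -/
def IsExtentPartition (I : G → M → Prop) (H : Set G) (π : Set (Set G)) : Prop :=
  (∀ A ∈ π, A.Nonempty) ∧ π.Pairwise Disjoint ∧ ⋃₀ π = H ∧ ∀ A ∈ π, IsExtent I H A

/-- `E` is a box extent of the subcontext with object set `H`: a class of some extent
partition, or `∅''`. -/
def IsBoxExtent (I : G → M → Prop) (H E : Set G) : Prop :=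
  (∃ π : Set (Set G), IsExtentPartition I H π ∧ E ∈ π) ∨ E = cl2 I H ∅

/-- The finest extent partition: every class of every extent partition is a union of
its classes. -/
def IsFinestExtentPartition (I : G → M → Prop) (H : Set G) (π : Set (Set G)) : Prop :=
  IsExtentPartition I H π ∧
    ∀ σ : Set (Set G), IsExtentPartition I H σ → ∀ A ∈ σ, ∃ S ⊆ π, A = ⋃₀ S

/-- A classification tree in the box extent lattice of the subcontext with object set
`H`: a set of nonempty box extents such that for every nonempty box extent `X`,
`{E ∈ T | X ⊆ E}` is a nonempty chain under inclusion. -/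
def IsBoxClassTree (I : G → M → Prop) (H : Set G) (T : Set (Set G)) : Prop :=
  (∀ E ∈ T, E.Nonempty ∧ IsBoxExtent I H E) ∧
  ∀ X : Set G, X.Nonempty → IsBoxExtent I H X →
    ({E ∈ T | X ⊆ E}.Nonempty ∧ IsChain (· ⊆ ·) {E ∈ T | X ⊆ E})

/-- A maximal classification tree in the box extent lattice. -/
def IsMaxBoxClassTree (I : G → M → Prop) (H : Set G) (T : Set (Set G)) : Prop :=
  IsBoxClassTree I H T ∧ ∀ T' : Set (Set G), IsBoxClassTree I H T' → T ⊆ T' → T' = T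

/-- Given a classification tree `T` of the subcontext `(G ∖ {z}, M, I ∩ (G∖{z})×M)`,
`treeStar I z T = T⁽¹⁾ ∪ {E ∪ {z} | E ∈ T⁽²⁾}`, where `T⁽¹⁾` consists of the members of
`T` that are box extents of `(G,M,I)` and `T⁽²⁾` of those `E ∈ T` with `E ∪ {z}` a box
extent of `(G,M,I)`. -/
def treeStar (I : G → M → Prop) (z : G) (T : Set (Set G)) : Set (Set G) :=
  {E ∈ T | IsBoxExtent I Set.univ E} ∪
    (fun E => E ∪ {z}) '' {E ∈ T | IsBoxExtent I Set.univ (E ∪ {z})}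

/- ### Auxiliary lemmas -/

lemma aux_subset_cl2 (I : G → M → Prop) {H A : Set G} (hA : A ⊆ H) : A ⊆ cl2 I H A :=
  fun g hg => ⟨hA hg, fun _ hm => hm g hg⟩

lemma aux_cl2_mono (I : G → M → Prop) {H A B : Set G} (hAB : A ⊆ B) :
    cl2 I H A ⊆ cl2 I H B :=
  fun g hg => ⟨hg.1, fun m hm => hg.2 m fun x hx => hm x (hAB hx)⟩

lemma aux_cl2_restrict (I : G → M → Prop) (z : G) (A : Set G) :
    cl2 I (Set.univ \ {z}) A = cl2 I Set.univ A \ {z} := by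
  ext g
  simp only [cl2, polarDown, Set.mem_setOf_eq, Set.mem_diff, Set.mem_univ, true_and]
  tauto

/-- Every maximal classification tree `T_G` in `B(G,M,I)` arises as `M*` for some
maximal classification tree `M` in the box extent lattice of the subcontext
`(G ∖ {z}, M, I ∩ (G∖{z})×M)` (assuming `z^□□ ≠ {z}`). -/
theorem maxBoxClassTree_eq_treeStar_of_maxSubcontextTree
    [Fintype G] [Fintype M] (I : G → M → Prop)
    (hempty : cl2 I Set.univ (∅ : Set G) = ∅)
    (z : G) (π : Set (Set G)) (hπ : IsFinestExtentPartition I Set.univ π)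
    (Z : Set G) (hZ : Z ∈ π) (hzZ : z ∈ Z) (hZne : Z ≠ {z})
    (TG : Set (Set G)) (hTG : IsMaxBoxClassTree I Set.univ TG) :
    ∃ Mx : Set (Set G), IsMaxBoxClassTree I (Set.univ \ {z}) Mx ∧
      TG = treeStar I z Mx := by
  classical
  have hTGtree := hTG.1
  -- a point of Z other than z
  have hy : ∃ y, y ∈ Z ∧ y ≠ z := by
    by_contra h
    push_neg at h
    apply hZne
    ext x
    simp only [Set.mem_singleton_iff]
    exact ⟨fun hx => h x hx, fun hx => hx ▸ hzZ⟩
  -- every nonempty box extent of (G,M,I) is a union of π-classes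
  have hpiSub : ∀ F : Set G, IsBoxExtent I Set.univ F → F.Nonempty →
      ∀ A ∈ π, ∀ x, x ∈ A → x ∈ F → A ⊆ F := by
    intro F hF hFne A hA x hxA hxF
    rcases hF with ⟨σ, hσ, hFσ⟩ | hF
    · obtain ⟨S, hSπ, hFS⟩ := hπ.2 σ hσ F hFσ
      subst hFS
      obtain ⟨A', hA'S, hxA'⟩ := hxF
      have hAA' : A = A' :=
        hπ.1.2.1.eq hA (hSπ hA'S) (Set.not_disjoint_iff.mpr ⟨x, hxA, hxA'⟩)
      exact Set.subset_sUnion_of_mem (hAA' ▸ hA'S)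
    · rw [hempty] at hF
      exact absurd hF hFne.ne_empty
  have hZsub : ∀ F, IsBoxExtent I Set.univ F → z ∈ F → Z ⊆ F :=
    fun F hF hzF => hpiSub F hF ⟨z, hzF⟩ Z hZ z hzZ hzF
  -- the deletion map is an order-embedding on nonempty box extents of (G,M,I)
  have hemb : ∀ F₁ F₂ : Set G, IsBoxExtent I Set.univ F₁ → IsBoxExtent I Set.univ F₂ →
      F₁.Nonempty → F₁ \ {z} ⊆ F₂ \ {z} → F₁ ⊆ F₂ := by
    intro F₁ F₂ h1 h2 hne hsub
    by_cases hz1 : z ∈ F₁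
    · obtain ⟨y, hyZ, hyz⟩ := hy
      have hyF1 : y ∈ F₁ := hZsub F₁ h1 hz1 hyZ
      have hyF2 : y ∈ F₂ := (hsub ⟨hyF1, by simpa using hyz⟩).1
      have hzF2 : z ∈ F₂ := hpiSub F₂ h2 ⟨y, hyF2⟩ Z hZ y hyZ hyF2 hzZ
      intro x hx
      by_cases hxz : x = z
      · exact hxz ▸ hzF2
      · exact (hsub ⟨hx, by simpa using hxz⟩).1
    · intro x hx
      have hxz : x ≠ z := fun h => hz1 (h ▸ hx)
      exact (hsub ⟨hx, by simpa using hxz⟩).1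
  -- deleting z from a nonempty box extent of (G,M,I) gives a nonempty box extent of H
  have hdel : ∀ F : Set G, IsBoxExtent I Set.univ F → F.Nonempty →
      (F \ {z}).Nonempty ∧ IsBoxExtent I (Set.univ \ {z}) (F \ {z}) := by
    intro F hF hFne
    rcases hF with ⟨σ, hσ, hFσ⟩ | hF
    · have hBne : ∀ B ∈ σ, (B \ {z}).Nonempty := by
        intro B hB
        by_cases hzB : z ∈ B
        · have hZB : Z ⊆ B := hZsub B (Or.inl ⟨σ, hσ, hB⟩) hzB
          obtain ⟨y, hyZ, hyz⟩ := hy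
          exact ⟨y, hZB hyZ, by simpa using hyz⟩
        · obtain ⟨x, hx⟩ := hσ.1 B hB
          refine ⟨x, hx, ?_⟩
          simp only [Set.mem_singleton_iff]
          exact fun h => hzB (h ▸ hx)
      refine ⟨hBne F hFσ, Or.inl ⟨(· \ {z}) '' σ, ⟨?_, ?_, ?_, ?_⟩, ⟨F, hFσ, rfl⟩⟩⟩
      · rintro A ⟨B, hB, rfl⟩
        exact hBne B hB
      · rintro A₁ ⟨B₁, hB₁, rfl⟩ A₂ ⟨B₂, hB₂, rfl⟩ hne
        have hB12 : B₁ ≠ B₂ := fun h => hne (h ▸ rfl)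
        exact Disjoint.mono Set.diff_subset Set.diff_subset (hσ.2.1 hB₁ hB₂ hB12)
      · ext x
        simp only [Set.sUnion_image, Set.mem_iUnion, Set.mem_diff, Set.mem_univ,
          true_and, exists_prop]
        constructor
        · rintro ⟨B, hB, hxB, hxz⟩
          exact hxz
        · intro hxz
          have : x ∈ ⋃₀ σ := hσ.2.2.1.symm ▸ (Set.mem_univ x)
          obtain ⟨B, hB, hxB⟩ := this
          exact ⟨B, hB, hxB, hxz⟩
      · rintro A ⟨B, hB, rfl⟩
        have hBex := hσ.2.2.2 B hB
        constructor
        · intro x hx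
          exact ⟨trivial, hx.2⟩
        · rw [aux_cl2_restrict]
          apply subset_antisymm
          · intro g hg
            refine ⟨?_, hg.2⟩
            have : g ∈ cl2 I Set.univ B := aux_cl2_mono I Set.diff_subset hg.1
            exact hBex.2 ▸ this
          · intro g hg
            exact ⟨aux_subset_cl2 I (Set.subset_univ _) hg, hg.2⟩
    · rw [hempty] at hF
      exact absurd hF hFne.ne_empty
  -- univ is a box extent and belongs to TG
  have huniv_box : IsBoxExtent I Set.univ (Set.univ : Set G) := by
    refine Or.inl ⟨{Set.univ}, ⟨?_, ?_, ?_, ?_⟩, rfl⟩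
    · rintro A rfl
      exact ⟨z, trivial⟩
    · exact Set.pairwise_singleton _ _
    · exact Set.sUnion_singleton _
    · rintro A rfl
      refine ⟨subset_rfl, subset_antisymm (fun _ _ => trivial) ?_⟩
      exact aux_subset_cl2 I subset_rfl
  have hunivTG : (Set.univ : Set G) ∈ TG := by
    obtain ⟨E, ⟨hETG, hsubE⟩⟩ := (hTGtree.2 Set.univ ⟨z, trivial⟩ huniv_box).1
    rwa [Set.univ_subset_iff.mp hsubE] at hETG
  -- nonempty box extents of the subcontext avoid z
  have hsubH' : ∀ X : Set G, IsBoxExtent I (Set.univ \ {z}) X → X.Nonempty →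
      X ⊆ Set.univ \ {z} := by
    intro X hX hXne
    rcases hX with ⟨σ, hσ, hXσ⟩ | hX
    · exact (hσ.2.2.2 X hXσ).1
    · rw [aux_cl2_restrict, hempty, Set.empty_diff] at hX
      exact absurd hX hXne.ne_empty
  -- the image of TG under deletion of z is a classification tree of the subcontext
  set S : Set (Set G) := (· \ {z}) '' TG with hSdef
  have hStree : IsBoxClassTree I (Set.univ \ {z}) S := by
    constructor
    · rintro E ⟨F, hF, rfl⟩
      obtain ⟨hFne, hFbox⟩ := hTGtree.1 F hF
      exact hdel F hFbox hFne
    · intro X hXne hX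
      have hXsub : X ⊆ Set.univ \ {z} := hsubH' X hX hXne
      constructor
      · exact ⟨Set.univ \ {z}, ⟨Set.univ, hunivTG, rfl⟩, hXsub⟩
      · rintro E₁ ⟨⟨F₁, hF₁, rfl⟩, hXE₁⟩ E₂ ⟨⟨F₂, hF₂, rfl⟩, hXE₂⟩ hne
        obtain ⟨x, hx⟩ := hXne
        have hxuniv : x ∈ ⋃₀ π := hπ.1.2.2.1.symm ▸ (Set.mem_univ x)
        obtain ⟨A, hAπ, hxA⟩ := hxuniv
        obtain ⟨hF₁ne, hF₁box⟩ := hTGtree.1 F₁ hF₁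
        obtain ⟨hF₂ne, hF₂box⟩ := hTGtree.1 F₂ hF₂
        have hA1 : A ⊆ F₁ := hpiSub F₁ hF₁box hF₁ne A hAπ x hxA (hXE₁ hx).1
        have hA2 : A ⊆ F₂ := hpiSub F₂ hF₂box hF₂ne A hAπ x hxA (hXE₂ hx).1
        have hAbox : IsBoxExtent I Set.univ A := Or.inl ⟨π, hπ.1, hAπ⟩
        have hAne : A.Nonempty := hπ.1.1 A hAπ
        rcases eq_or_ne F₁ F₂ with h | h
        · exact absurd (h ▸ rfl) hne
        · rcases (hTGtree.2 A hAne hAbox).2 ⟨hF₁, hA1⟩ ⟨hF₂, hA2⟩ h with h' | h'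
          · exact Or.inl (Set.diff_subset_diff_left h')
          · exact Or.inr (Set.diff_subset_diff_left h')
  -- choose a maximal classification tree of the subcontext containing S
  obtain ⟨Mx, hMx𝒯, hMxmax⟩ :=
    Set.Finite.exists_maximalFor id
      {T : Set (Set G) | IsBoxClassTree I (Set.univ \ {z}) T ∧ S ⊆ T}
      (Set.toFinite _) ⟨S, hStree, subset_rfl⟩
  have hMxTree : IsBoxClassTree I (Set.univ \ {z}) Mx := hMx𝒯.1
  have hSMx : S ⊆ Mx := hMx𝒯.2
  have hMxMax : IsMaxBoxClassTree I (Set.univ \ {z}) Mx :=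
    ⟨hMxTree, fun T' hT' hsub =>
      subset_antisymm (hMxmax (j := T') ⟨hT', hSMx.trans hsub⟩ hsub) hsub⟩
  -- the key absorption lemma
  have hkey : ∀ Y : Set G, Y.Nonempty → IsBoxExtent I Set.univ Y → Y \ {z} ∈ Mx →
      Y ∈ TG := by
    intro Y hYne hYbox hYMx
    have htree : IsBoxClassTree I Set.univ (insert Y TG) := by
      constructor
      · rintro E (rfl | hE)
        · exact ⟨hYne, hYbox⟩
        · exact hTGtree.1 E hE
      · intro X hXne hXbox
        have hφX := hdel X hXbox hXne
        constructor
        · obtain ⟨E, hE, hXE⟩ := (hTGtree.2 X hXne hXbox).1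
          exact ⟨E, Or.inr hE, hXE⟩
        · have hcomp : ∀ D ∈ TG, X ⊆ D → X ⊆ Y → Y ⊆ D ∨ D ⊆ Y := by
            intro D hD hXD hXY
            obtain ⟨hDne, hDbox⟩ := hTGtree.1 D hD
            have hφD : D \ {z} ∈ Mx := hSMx ⟨D, hD, rfl⟩
            have hs1 : X \ {z} ⊆ Y \ {z} := Set.diff_subset_diff_left hXY
            have hs2 : X \ {z} ⊆ D \ {z} := Set.diff_subset_diff_left hXD
            rcases eq_or_ne (Y \ {z}) (D \ {z}) with he | hne'
            · exact Or.inl (hemb Y D hYbox hDbox hYne (he ▸ subset_rfl))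
            · rcases (hMxTree.2 (X \ {z}) hφX.1 hφX.2).2
                  ⟨hYMx, hs1⟩ ⟨hφD, hs2⟩ hne' with h | h
              · exact Or.inl (hemb Y D hYbox hDbox hYne h)
              · exact Or.inr (hemb D Y hDbox hYbox hDne h)
          rintro D₁ ⟨(rfl | hD₁), hXD₁⟩ D₂ ⟨(rfl | hD₂), hXD₂⟩ hne
          · exact absurd rfl hne
          · exact hcomp D₂ hD₂ hXD₂ hXD₁
          · exact (hcomp D₁ hD₁ hXD₁ hXD₂).symm
          · exact (hTGtree.2 X hXne hXbox).2 ⟨hD₁, hXD₁⟩ ⟨hD₂, hXD₂⟩ hne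
    have := hTG.2 (insert Y TG) htree (Set.subset_insert _ _)
    rw [← this]
    exact Set.mem_insert _ _
  -- conclusion
  refine ⟨Mx, hMxMax, ?_⟩
  ext F
  constructor
  · intro hF
    obtain ⟨hFne, hFbox⟩ := hTGtree.1 F hF
    by_cases hzF : z ∈ F
    · right
      have heq : F \ {z} ∪ {z} = F := by
        rw [Set.diff_union_self,
          Set.union_eq_self_of_subset_right (Set.singleton_subset_iff.mpr hzF)]
      have hmem : F \ {z} ∈ Mx := hSMx ⟨F, hF, rfl⟩
      exact ⟨F \ {z}, ⟨hmem, heq.symm ▸ hFbox⟩, heq⟩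
    · left
      refine ⟨?_, hFbox⟩
      have hmem : F \ {z} ∈ Mx := hSMx ⟨F, hF, rfl⟩
      rwa [Set.diff_singleton_eq_self hzF] at hmem
  · rintro (⟨hFMx, hFbox⟩ | ⟨E, ⟨hEMx, hEbox⟩, rfl⟩)
    · obtain ⟨hFne, hFboxH⟩ := hMxTree.1 F hFMx
      have hzF : z ∉ F := fun h => (hsubH' F hFboxH hFne h).2 rfl
      exact hkey F hFne hFbox (by rwa [Set.diff_singleton_eq_self hzF])
    · obtain ⟨hEne, hEboxH⟩ := hMxTree.1 E hEMx
      have hzE : z ∉ E := fun h => (hsubH' E hEboxH hEne h).2 rfl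
      refine hkey (E ∪ {z}) ⟨z, Or.inr rfl⟩ hEbox ?_
      rwa [Set.union_diff_distrib, Set.diff_singleton_eq_self hzE, Set.diff_self,
        Set.union_empty]
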